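/- Let 𝔤 be a finite-dimensional complex semisimple Lie algebra with Cartan subalgebra 𝔥, root system Φ, and base Π. Let I₊ ⊆ Π and I₋ ⊆ −Π, set Ψ± = {α ∈ Φ : Supp α ⊆ I±}, 𝔩± = ⊕_{α ∈ Ψ±} 𝔤_α, and 𝔩 = 𝔩₊ ⊕ 𝔥 ⊕ 𝔩₋. Then 𝔩 equals its own normalizer in 𝔤, i.e. {x ∈ 𝔤 : [x, 𝔩] ⊆ 𝔩} = 𝔩. -/

import Mathlib

/-- Let 𝔤 be a complex semisimple Lie algebra with Cartan subalgebra 𝔥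
and root space decomposition 𝔤 = 𝔥 ⊕ ⊕_{α∈Φ} 𝔤_α.  For I₊ ⊆ Π, I₋ ⊆ −Π let
Ψ± = {α ∈ Φ : Supp α ⊆ I±} and 𝔩 = 𝔩₊ ⊕ 𝔥 ⊕ 𝔩₋.  Then 𝔩 equals its own normalizer:
{x ∈ 𝔤 : [x, 𝔩] ⊆ 𝔩} = 𝔩.  The root data is axiomatized: coordinates `c α : ι → ℤ`
in the base, supports, signs, root functionals `w α` (nonzero, with
[h, x] = w α (h) • x for x ∈ 𝔤_α), the bracket relations among root spaces, and the
internal direct sum decomposition 𝔤 = 𝔥 ⊕ ⊕_α 𝔤_α. -/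
theorem normalizer_of_l_eq_l
    (L : Type*) [LieRing L] [LieAlgebra ℂ L] [LieAlgebra.IsSemisimple ℂ L]
    (H : LieSubalgebra ℂ L) [H.IsCartanSubalgebra]
    (Φ ι : Type*) [Fintype Φ] [DecidableEq Φ]
    (g : Φ → Submodule ℂ L)
    (c : Φ → ι → ℤ)
    (IsPos : Φ → Prop)
    (hpos : ∀ α, IsPos α ↔ ∀ i, 0 ≤ c α i)
    (hposneg : ∀ α, IsPos α ∨ ∀ i, c α i ≤ 0)
    (Supp : Φ → Set ι)
    (hSupp : ∀ α, Supp α = {i | c α i ≠ 0})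
    (w : Φ → ((H : Submodule ℂ L) →ₗ[ℂ] ℂ))
    (hw : ∀ α, w α ≠ 0)
    (hroot : ∀ α (h : (H : Submodule ℂ L)) (x : L), x ∈ g α →
      ⁅(h : L), x⁆ = w α h • x)
    (hHg : ∀ α, ∀ x ∈ (H : Submodule ℂ L), ∀ y ∈ g α, ⁅x, y⁆ ∈ g α)
    (hgg : ∀ α β, ∀ x ∈ g α, ∀ y ∈ g β,
      ⁅x, y⁆ ∈ (H : Submodule ℂ L) ⊔ ⨆ γ ∈ {γ | c γ = c α + c β}, g γ)
    (hinternal : DirectSum.IsInternal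
      (fun o : Option Φ => o.elim (H : Submodule ℂ L) g))
    (Iplus Iminus : Set ι)
    (Ψ : Set Φ)
    (hΨ : Ψ = {α | (IsPos α ∧ Supp α ⊆ Iplus) ∨ (¬ IsPos α ∧ Supp α ⊆ Iminus)})
    (l : Submodule ℂ L)
    (hl : l = (H : Submodule ℂ L) ⊔ ⨆ α ∈ Ψ, g α) :
    {x : L | ∀ y ∈ l, ⁅x, y⁆ ∈ l} = (l : Set L) := by
  classical
  have hHl : (H : Submodule ℂ L) ≤ l := hl ▸ le_sup_left
  have hgl : ∀ α ∈ Ψ, g α ≤ l := fun α hα => hl ▸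
    le_trans (le_iSup₂ (f := fun α _ => g α) α hα) le_sup_right
  -- arithmetic description of membership in Ψ
  have hΨmem : ∀ α ∈ Ψ, (∀ i, 0 ≤ c α i ∧ (c α i ≠ 0 → i ∈ Iplus)) ∨
      (∀ i, c α i ≤ 0 ∧ (c α i ≠ 0 → i ∈ Iminus)) := by
    intro α hα
    rw [hΨ] at hα
    rcases hα with ⟨hp, hs⟩ | ⟨hp, hs⟩
    · exact Or.inl fun i => ⟨(hpos α).1 hp i, fun h => hs (by rw [hSupp]; exact h)⟩
    · exact Or.inr fun i => ⟨(hposneg α).resolve_left hp i, fun h => hs (by rw [hSupp]; exact h)⟩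
  -- Ψ is closed under addition of roots
  have hΨclosed : ∀ α ∈ Ψ, ∀ β ∈ Ψ, ∀ γ, c γ = c α + c β → γ ∈ Ψ := by
    intro α hα β hβ γ hγ
    have hγi : ∀ i, c γ i = c α i + c β i := fun i => by rw [hγ]; rfl
    rw [hΨ]
    rcases hposneg γ with hp | hn
    · refine Or.inl ⟨hp, fun i hi => ?_⟩
      rw [hSupp] at hi
      have h1 : 0 < c γ i := lt_of_le_of_ne ((hpos γ).1 hp i) (Ne.symm hi)
      have h2 : 0 < c α i ∨ 0 < c β i := by have := hγi i; omega
      rcases h2 with h2 | h2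
      · rcases hΨmem α hα with hc | hc
        · exact (hc i).2 (by omega)
        · exact absurd (hc i).1 (by omega)
      · rcases hΨmem β hβ with hc | hc
        · exact (hc i).2 (by omega)
        · exact absurd (hc i).1 (by omega)
    · by_cases hp : IsPos γ
      · refine Or.inl ⟨hp, fun i hi => ?_⟩
        rw [hSupp] at hi
        exact absurd (le_antisymm (hn i) ((hpos γ).1 hp i)) hi
      · refine Or.inr ⟨hp, fun i hi => ?_⟩
        rw [hSupp] at hi
        have h1 : c γ i < 0 := lt_of_le_of_ne (hn i) hi
        have h2 : c α i < 0 ∨ c β i < 0 := by have := hγi i; omega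
        rcases h2 with h2 | h2
        · rcases hΨmem α hα with hc | hc
          · exact absurd (hc i).1 (by omega)
          · exact (hc i).2 (by omega)
        · rcases hΨmem β hβ with hc | hc
          · exact absurd (hc i).1 (by omega)
          · exact (hc i).2 (by omega)
  -- l is closed under the bracket
  have hclosed : ∀ x ∈ l, ∀ y ∈ l, ⁅x, y⁆ ∈ l := by
    set N : Submodule ℂ L :=
      { carrier := {x : L | ∀ y ∈ l, ⁅x, y⁆ ∈ l}
        add_mem' := fun ha hb y hy => by
          rw [add_lie]; exact l.add_mem (ha y hy) (hb y hy)
        zero_mem' := fun y hy => by rw [zero_lie]; exact l.zero_mem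
        smul_mem' := fun t a ha y hy => by
          rw [smul_lie]; exact l.smul_mem t (ha y hy) } with hN
    have hNmem : ∀ x : L, (∀ y ∈ l, ⁅x, y⁆ ∈ l) → x ∈ N := fun x h => h
    have hNmem' : ∀ x : L, x ∈ N → ∀ y ∈ l, ⁅x, y⁆ ∈ l := fun x h => h
    have hle : l ≤ N := by
      rw [hl]
      refine sup_le ?_ (iSup₂_le fun α hα => ?_)
      · intro x hx
        refine hNmem x fun y hy => ?_
        have hsub : l ≤ Submodule.comap (LieAlgebra.ad ℂ L x) l := by
          refine le_trans (le_of_eq hl) ?_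
          refine sup_le ?_ (iSup₂_le fun β hβ => ?_) <;> intro z hz <;>
            simp only [Submodule.mem_comap, LieAlgebra.ad_apply]
          · exact hHl (H.lie_mem hx hz)
          · exact hgl β hβ (hHg β x hx z hz)
        have := hsub hy
        rwa [Submodule.mem_comap, LieAlgebra.ad_apply] at this
      · intro x hx
        refine hNmem x fun y hy => ?_
        have hsub : l ≤ Submodule.comap (LieAlgebra.ad ℂ L x) l := by
          refine le_trans (le_of_eq hl) ?_
          refine sup_le ?_ (iSup₂_le fun β hβ => ?_) <;> intro z hz <;>
            simp only [Submodule.mem_comap, LieAlgebra.ad_apply]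
          · have heq : ⁅x, z⁆ = -(w α ⟨z, hz⟩ • x) := by
              rw [← lie_skew, hroot α ⟨z, hz⟩ x hx]
            rw [heq]
            exact l.neg_mem (l.smul_mem _ (hgl α hα hx))
          · have hmem := hgg α β x hx z hz
            refine (sup_le hHl (iSup₂_le fun γ hγ => ?_) : _ ≤ l) hmem
            exact hgl γ (hΨclosed α hα β hβ γ hγ)
        have := hsub hy
        rwa [Submodule.mem_comap, LieAlgebra.ad_apply] at this
    intro x hx y hy
    exact hNmem' x (hle hx) y hy
  -- the decomposition
  set A : Option Φ → Submodule ℂ L := fun o => o.elim (H : Submodule ℂ L) g with hA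
  set E := LinearEquiv.ofBijective (DirectSum.coeLinearMap A) hinternal with hE
  set D := E.symm with hD
  have hED : ∀ x : L, DirectSum.coeLinearMap A (D x) = x := fun x => E.apply_symm_apply x
  have hsum : ∀ x : L, x = ∑ o ∈ (D x).support, ((D x o : L)) := by
    intro x
    conv_lhs => rw [← hED x, ← DirectSum.sum_support_of (x := D x), map_sum]
    simp [DirectSum.coeLinearMap_of]
  have hproj_mem : ∀ (o : Option Φ) (x : L) (hx : x ∈ A o), D x o = ⟨x, hx⟩ :=
    fun o x hx => hinternal.ofBijective_coeLinearMap_of_mem hx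
  have hproj_ne : ∀ (o o' : Option Φ) (x : L), x ∈ A o → o ≠ o' → D x o' = 0 :=
    fun o o' x hx hne => hinternal.ofBijective_coeLinearMap_of_mem_ne hne hx
  have hlproj : ∀ α ∉ Ψ, ∀ y ∈ l, D y (some α) = 0 := by
    intro α hα y hy
    rw [hl] at hy
    set f : L →ₗ[ℂ] A (some α) :=
      (DirectSum.component ℂ (Option Φ) (fun o => A o) (some α)).comp D.toLinearMap with hf
    have hker : (H : Submodule ℂ L) ⊔ ⨆ β ∈ Ψ, g β ≤ LinearMap.ker f := by
      refine sup_le ?_ (iSup₂_le fun β hβ => ?_) <;> intro z hz <;>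
        simp only [LinearMap.mem_ker, hf, LinearMap.comp_apply, LinearEquiv.coe_coe,
          DirectSum.component, DFinsupp.lapply_apply]
      · exact hproj_ne none (some α) z hz (by simp)
      · refine hproj_ne (some β) (some α) z hz ?_
        simp only [ne_eq, Option.some.injEq]
        rintro rfl; exact hα hβ
    have := hker hy
    exact this
  ext x
  simp only [Set.mem_setOf_eq, SetLike.mem_coe]
  constructor
  · intro hx
    have hcomp : ∀ α ∉ Ψ, D x (some α) = 0 := by
      intro α hα
      obtain ⟨h', hh'⟩ : ∃ h' : (H : Submodule ℂ L), w α h' ≠ 0 := by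
        by_contra hcon
        push_neg at hcon
        exact hw α (LinearMap.ext fun z => by simpa using hcon z)
      have hbr : ⁅x, (h' : L)⁆ ∈ l := hx _ (hHl h'.2)
      have h0 : D ⁅x, (h' : L)⁆ (some α) = 0 := hlproj α hα _ hbr
      have hxb : ⁅x, (h' : L)⁆ = ∑ o ∈ (D x).support, ⁅((D x o : L)), (h' : L)⁆ := by
        conv_lhs => rw [hsum x]
        exact map_sum (AddMonoidHom.mk' (fun a : L => ⁅a, (h' : L)⁆)
          (fun a b => add_lie a b _)) _ _
      have hterm : ∀ o : Option Φ, ((D ⁅((D x o : L)), (h' : L)⁆ (some α) : L))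
          = if o = some α then -(w α h') • (D x (some α) : L) else 0 := by
        intro o
        match o with
        | none =>
          have hmem : ⁅((D x none : L)), (h' : L)⁆ ∈ A none :=
            H.lie_mem (D x none).2 h'.2
          rw [hproj_ne none (some α) _ hmem (by simp)]
          simp
        | some β =>
          have hval : ⁅((D x (some β) : L)), (h' : L)⁆ = -(w β h') • (D x (some β) : L) := by
            rw [← lie_skew, hroot β h' _ (D x (some β)).2, neg_smul]
          by_cases hβα : β = α
          · subst hβα
            have hmem : ⁅((D x (some β) : L)), (h' : L)⁆ ∈ A (some β) := by
              rw [hval]; exact (g β).smul_mem _ (D x (some β)).2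
            rw [hproj_mem (some β) _ hmem]
            simp [hval]
          · have hmem : ⁅((D x (some β) : L)), (h' : L)⁆ ∈ A (some β) := by
              rw [hval]; exact (g β).smul_mem _ (D x (some β)).2
            rw [hproj_ne (some β) (some α) _ hmem (by simpa using hβα)]
            simp [hβα]
      have hsplit : D ⁅x, (h' : L)⁆ = ∑ o ∈ (D x).support, D ⁅((D x o : L)), (h' : L)⁆ := by
        rw [hxb, map_sum]
      have hev : ((D ⁅x, (h' : L)⁆ (some α) : L))
          = ∑ o ∈ (D x).support, ((D ⁅((D x o : L)), (h' : L)⁆ (some α) : L)) := by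
        rw [hsplit, DFinsupp.finset_sum_apply]
        push_cast
        rfl
      rw [h0] at hev
      simp only [hterm, ZeroMemClass.coe_zero, Finset.sum_ite_eq'] at hev
      by_cases hmem : some α ∈ (D x).support
      · rw [if_pos hmem] at hev
        have h2 : -(w α h') • (D x (some α) : L) = 0 := hev.symm
        rcases smul_eq_zero.mp h2 with h3 | h3
        · exact absurd (neg_eq_zero.mp h3) hh'
        · exact Subtype.ext h3
      · exact DFinsupp.notMem_support_iff.mp hmem
    rw [hsum x]
    refine l.sum_mem fun o ho => ?_
    match o with
    | none => exact hHl (D x none).2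
    | some β =>
      by_cases hβ : β ∈ Ψ
      · exact hgl β hβ (D x (some β)).2
      · rw [hcomp β hβ]; simp
  · intro hx y hy
    exact hclosed x hx y hy
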